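/- Let n ≥ 4 and let B be an n-sided die with face counts γ_k, and define ξ_k = γ_k + γ_{k+1} for k = 1,...,n−1. If all ξ_k are equal, then B is the standard die (every γ_k = 1). -/

import Mathlib

/-- An `n`-sided die: a multiset of `n` integers, each in `{1,…,n}`, summing to `n(n+1)/2`. -/
def IsDie (n : ℕ) (D : Multiset ℕ) : Prop :=
  Multiset.card D = n ∧ (∀ d ∈ D, 1 ≤ d ∧ d ≤ n) ∧ D.sum = n * (n + 1) / 2

/-- The standard die `[1,2,…,n]`. -/
def std (n : ℕ) : Multiset ℕ := (Multiset.range n).map (· + 1)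

/-- Number of ordered pairs `(a,b)` with `a ∈ A`, `b ∈ B`, `a > b`. -/
def wins (A B : Multiset ℕ) : ℕ :=
  Multiset.countP (fun p => p.2 < p.1) (A ×ˢ B)

/-- Number of ordered pairs `(a,b)` with `a ∈ A`, `b ∈ B`, `a = b`. -/
def ties (A B : Multiset ℕ) : ℕ :=
  Multiset.countP (fun p => p.1 = p.2) (A ×ˢ B)

/-- Payoff of `A` against `B`: `P(A > B) + (1/2) P(A = B)` under uniform independent rolls. -/
def payoff (n : ℕ) (A B : Multiset ℕ) : ℚ :=
  ((wins A B : ℚ) + (ties A B : ℚ) / 2) / (n ^ 2)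

/-- `A` beats `B` if strictly more pairs favor `A` than favor `B`. -/
def Beats (A B : Multiset ℕ) : Prop := wins B A < wins A B

lemma sumAlt1 (a b : ℕ) : ∀ n, ∑ k ∈ Finset.Icc 1 n, (if k % 2 = 1 then a else b)
    = (n + 1) / 2 * a + n / 2 * b := by
  intro n
  induction n with
  | zero => simp
  | succ m ih =>
    rw [Finset.sum_Icc_succ_top (by omega), ih]
    rcases Nat.even_or_odd m with ⟨q, rfl⟩ | ⟨q, rfl⟩
    · have h1 : (q + q + 1) % 2 = 1 := by omega
      have h2 : (q + q + 1) / 2 = q := by omega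
      have h3 : (q + q) / 2 = q := by omega
      have h4 : (q + q + 1 + 1) / 2 = q + 1 := by omega
      rw [if_pos h1, h2, h3, h4]; ring
    · have h1 : ¬ (2 * q + 1 + 1) % 2 = 1 := by omega
      have h2 : (2 * q + 1 + 1) / 2 = q + 1 := by omega
      have h3 : (2 * q + 1) / 2 = q := by omega
      have h4 : (2 * q + 1 + 1 + 1) / 2 = q + 1 := by omega
      rw [if_neg h1, h2, h3, h4]; ring

lemma sumAlt2 (a b : ℕ) : ∀ n, ∑ k ∈ Finset.Icc 1 n, (if k % 2 = 1 then a else b) * k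
    = ((n + 1) / 2) ^ 2 * a + (n / 2) * (n / 2 + 1) * b := by
  intro n
  induction n with
  | zero => simp
  | succ m ih =>
    rw [Finset.sum_Icc_succ_top (by omega), ih]
    rcases Nat.even_or_odd m with ⟨q, rfl⟩ | ⟨q, rfl⟩
    · have h1 : (q + q + 1) % 2 = 1 := by omega
      have h2 : (q + q + 1) / 2 = q := by omega
      have h3 : (q + q) / 2 = q := by omega
      have h4 : (q + q + 1 + 1) / 2 = q + 1 := by omega
      rw [if_pos h1, h2, h3, h4]; ring
    · have h1 : ¬ (2 * q + 1 + 1) % 2 = 1 := by omega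
      have h2 : (2 * q + 1 + 1) / 2 = q + 1 := by omega
      have h3 : (2 * q + 1) / 2 = q := by omega
      have h4 : (2 * q + 1 + 1 + 1) / 2 = q + 1 := by omega
      rw [if_neg h1, h2, h3, h4]; ring

/-- If `n ≥ 4` and all `ξ_k = γ_k + γ_{k+1}` (for `k = 1,…,n-1`) are equal,
then the die is standard: every face count equals 1. -/
theorem xi_const_implies_std (n : ℕ) (hn : 4 ≤ n) (B : Multiset ℕ) (hB : IsDie n B)
    (hxi : ∀ k ∈ Finset.Icc 1 (n - 1), ∀ l ∈ Finset.Icc 1 (n - 1),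
      Multiset.count k B + Multiset.count (k + 1) B
        = Multiset.count l B + Multiset.count (l + 1) B) :
    ∀ k ∈ Finset.Icc 1 n, Multiset.count k B = 1 := by
  obtain ⟨hcard, hmem, hsum⟩ := hB
  set a := Multiset.count 1 B with ha
  set b := Multiset.count 2 B with hb
  have hstep : ∀ k, 1 ≤ k → k + 2 ≤ n → Multiset.count (k + 2) B = Multiset.count k B := by
    intro k h1 h2
    have := hxi k (by simp [Finset.mem_Icc]; omega) (k + 1) (by simp [Finset.mem_Icc]; omega)
    rw [show k + 2 = k + 1 + 1 by ring]
    omega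
  have hc : ∀ k, 1 ≤ k → k ≤ n → Multiset.count k B = if k % 2 = 1 then a else b := by
    intro k
    induction k using Nat.strong_induction_on with
    | _ k ih =>
      match k with
      | 0 => intro h1 _; omega
      | 1 => intro _ _; simp [ha]
      | 2 => intro _ _; simp [hb]
      | (j + 3) =>
        intro h1 h2
        have e := hstep (j + 1) (by omega) (by omega)
        have e2 := ih (j + 1) (by omega) (by omega) (by omega)
        have e3 : (j + 1 + 2) % 2 = (j + 1) % 2 := by omega
        rw [show j + 3 = j + 1 + 2 by ring, e, e2, e3]
  have hsub : B.toFinset ⊆ Finset.Icc 1 n := by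
    intro x hx
    rw [Multiset.mem_toFinset] at hx
    exact Finset.mem_Icc.mpr (hmem x hx)
  have hzero : ∀ x ∈ Finset.Icc 1 n, x ∉ B.toFinset → Multiset.count x B = 0 := by
    intro x _ hx
    rw [Multiset.mem_toFinset] at hx
    exact Multiset.count_eq_zero.mpr hx
  have S1 : ∑ k ∈ Finset.Icc 1 n, Multiset.count k B = n := by
    rw [← Finset.sum_subset hsub hzero, Multiset.toFinset_sum_count_eq, hcard]
  have S2 : ∑ k ∈ Finset.Icc 1 n, Multiset.count k B * k = n * (n + 1) / 2 := by
    have h := Finset.sum_multiset_map_count B (id : ℕ → ℕ)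
    rw [Multiset.map_id] at h
    calc ∑ k ∈ Finset.Icc 1 n, Multiset.count k B * k
        = ∑ k ∈ B.toFinset, Multiset.count k B * k :=
          (Finset.sum_subset hsub (fun x hx h' => by rw [hzero x hx h']; ring)).symm
      _ = B.sum := by rw [h]; exact Finset.sum_congr rfl fun x _ => by simp [smul_eq_mul]
      _ = n * (n + 1) / 2 := hsum
  have E1 : (n + 1) / 2 * a + n / 2 * b = n := by
    calc (n + 1) / 2 * a + n / 2 * b
        = ∑ k ∈ Finset.Icc 1 n, (if k % 2 = 1 then a else b) := (sumAlt1 a b n).symm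
      _ = ∑ k ∈ Finset.Icc 1 n, Multiset.count k B := Finset.sum_congr rfl (fun k hk => by
          rw [Finset.mem_Icc] at hk; exact (hc k hk.1 hk.2).symm)
      _ = n := S1
  have E2 : ((n + 1) / 2) ^ 2 * a + (n / 2) * (n / 2 + 1) * b = n * (n + 1) / 2 := by
    calc ((n + 1) / 2) ^ 2 * a + (n / 2) * (n / 2 + 1) * b
        = ∑ k ∈ Finset.Icc 1 n, (if k % 2 = 1 then a else b) * k := (sumAlt2 a b n).symm
      _ = ∑ k ∈ Finset.Icc 1 n, Multiset.count k B * k := Finset.sum_congr rfl (fun k hk => by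
          rw [Finset.mem_Icc] at hk; rw [hc k hk.1 hk.2])
      _ = n * (n + 1) / 2 := S2
  have hab : a = 1 ∧ b = 1 := by
    rcases Nat.even_or_odd n with ⟨q, rfl⟩ | ⟨q, rfl⟩
    · have hq : 2 ≤ q := by omega
      have d1 : (q + q + 1) / 2 = q := by omega
      have d2 : (q + q) / 2 = q := by omega
      have d3 : (q + q) * (q + q + 1) / 2 = q * (2 * q + 1) := by
        rw [show (q + q) * (q + q + 1) = 2 * (q * (2 * q + 1)) by ring,
          Nat.mul_div_cancel_left _ (by norm_num)]
      rw [d1, d2] at E1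
      rw [d1, d2, d3] at E2
      have hab2 : a + b = 2 := by
        have h : q * (a + b) = q * 2 := by rw [Nat.mul_add]; nlinarith [E1]
        exact Nat.eq_of_mul_eq_mul_left (by omega) h
      have ha2 : a ≤ 2 := by omega
      interval_cases a
      · exfalso; have hb2 : b = 2 := by omega
        rw [hb2] at E2; nlinarith
      · exact ⟨rfl, by omega⟩
      · exfalso; have hb0 : b = 0 := by omega
        rw [hb0] at E2; nlinarith
    · have hq : 2 ≤ q := by omega
      have d1 : (2 * q + 1 + 1) / 2 = q + 1 := by omega
      have d2 : (2 * q + 1) / 2 = q := by omega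
      rw [d1, d2] at E1
      have haa : a ≤ 1 := by
        by_contra h
        push_neg at h
        nlinarith [E1]
      have hbb : b ≤ 2 := by
        by_contra h
        push_neg at h
        nlinarith [E1]
      interval_cases a <;> interval_cases b <;> omega
  intro k hk
  rw [Finset.mem_Icc] at hk
  rw [hc k hk.1 hk.2, hab.1, hab.2]
  split <;> rfl
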